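/- If n ≥ 11, then 3a₁ − b₁ < −0.049·h, and in particular 3a₁ − b₁ < −7h²/16. -/

import Mathlib

/-- `λ_j = 4 sin²(jπ/(4n))`. -/
noncomputable def lamRR (n j : ℕ) : ℝ :=
  4 * Real.sin ((j : ℝ) * Real.pi / (4 * (n : ℝ))) ^ 2

/-- `λ̃_j = (2/(n+1)) Σ_{i=1}^n sin²(inπ/(n+1)) / (4 sin²(iπ/(2(n+1))) + λ_j)`. -/
noncomputable def lamTildeRR (n j : ℕ) : ℝ :=
  (2 / ((n : ℝ) + 1)) * ∑ i ∈ Finset.Icc 1 n,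
    Real.sin ((i : ℝ) * (n : ℝ) * Real.pi / ((n : ℝ) + 1)) ^ 2 /
      (4 * Real.sin ((i : ℝ) * Real.pi / (2 * ((n : ℝ) + 1))) ^ 2 + lamRR n j)

/-- `a_j = (h - (h/6)λ_j) λ̃_j` with `h = 1/(2n)`. -/
noncomputable def aRR (n j : ℕ) : ℝ :=
  (1 / (2 * (n : ℝ)) - (1 / (2 * (n : ℝ))) / 6 * lamRR n j) * lamTildeRR n j

/-- `b_j = 1 - (1 + λ_j/2) λ̃_j`. -/
noncomputable def bRR (n j : ℕ) : ℝ :=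
  1 - (1 + lamRR n j / 2) * lamTildeRR n j

private lemma sum_s (n : ℕ) :
    ∑ i ∈ Finset.Icc 1 n, Real.sin ((i:ℝ)*Real.pi/(2*((n:ℝ)+1)))^2 = n/2 := by
  have key : ∀ i ∈ Finset.range n,
      Real.sin (((1+(n-1-i):ℕ):ℝ)*Real.pi/(2*((n:ℝ)+1)))^2
        + Real.sin (((1+i:ℕ):ℝ)*Real.pi/(2*((n:ℝ)+1)))^2 = 1 := by
    intro i hi
    rw [Finset.mem_range] at hi
    have h1 : ((1+(n-1-i):ℕ):ℝ) = (n:ℝ) - i := by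
      have : 1+(n-1-i) = n - i := by omega
      rw [this]
      push_cast [Nat.cast_sub (by omega : i ≤ n)]
      ring
    have h2 : ((n:ℝ) - i)*Real.pi/(2*((n:ℝ)+1))
        = Real.pi/2 - ((1+i:ℕ):ℝ)*Real.pi/(2*((n:ℝ)+1)) := by
      push_cast
      field_simp
      ring
    rw [h1, h2, Real.sin_pi_div_two_sub]
    exact Real.cos_sq_add_sin_sq _
  rw [← Finset.Ico_add_one_right_eq_Icc, Finset.sum_Ico_eq_sum_range]
  have h2 : (∑ i ∈ Finset.range n, Real.sin (((1+i:ℕ):ℝ)*Real.pi/(2*((n:ℝ)+1)))^2) * 2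
      = n := by
    set f : ℕ → ℝ := fun i => Real.sin (((1+i:ℕ):ℝ)*Real.pi/(2*((n:ℝ)+1)))^2 with hf
    calc (∑ i ∈ Finset.range n, f i) * 2
        = (∑ j ∈ Finset.range n, f (n-1-j)) + ∑ i ∈ Finset.range n, f i := by
          rw [Finset.sum_range_reflect]; ring
      _ = ∑ j ∈ Finset.range n, (f (n-1-j) + f j) := by rw [Finset.sum_add_distrib]
      _ = ∑ j ∈ Finset.range n, (1:ℝ) := Finset.sum_congr rfl key
      _ = n := by simp
  push_cast at h2 ⊢
  linarith

private lemma numer_eq (n i : ℕ) :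
    Real.sin ((i:ℝ)*(n:ℝ)*Real.pi/((n:ℝ)+1))^2
      = 4 * Real.sin ((i:ℝ)*Real.pi/(2*((n:ℝ)+1)))^2
          * (1 - Real.sin ((i:ℝ)*Real.pi/(2*((n:ℝ)+1)))^2) := by
  have hne : (n:ℝ)+1 ≠ 0 := by positivity
  have h1 : (i:ℝ)*(n:ℝ)*Real.pi/((n:ℝ)+1) = (i:ℝ)*Real.pi - (i:ℝ)*Real.pi/((n:ℝ)+1) := by
    field_simp; ring
  have h2 : (i:ℝ)*Real.pi/((n:ℝ)+1) = 2 * ((i:ℝ)*Real.pi/(2*((n:ℝ)+1))) := by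
    field_simp
  have hc : Real.cos ((i:ℝ)*Real.pi)^2 = 1 := by
    rw [Real.cos_sq', Real.sin_nat_mul_pi]; norm_num
  rw [h1, Real.sin_sub, Real.sin_nat_mul_pi, h2, Real.sin_two_mul]
  set y := (i:ℝ)*Real.pi/(2*((n:ℝ)+1)) with hy
  have hpyth := Real.sin_sq_add_cos_sq y
  linear_combination (4*Real.sin y^2*Real.cos y^2) * hc + 4*Real.sin y^2 * hpyth

private lemma term_decomp (s L : ℝ) (hs : 0 ≤ s) (hL : 0 < L) :
    4*s*(1-s) / (4*s + L) = (1 - s) - L*(1-s)/(4*s+L) := by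
  have hne : 4*s + L ≠ 0 := by positivity
  field_simp
  ring

private lemma g_lower (σ L d c u : ℝ) (hσ0 : 0 ≤ σ) (hσ1 : σ ≤ u*d) (hσ2 : σ ≤ 0.01714*u)
    (hL1 : 0.9974*d ≤ L) (hL2 : L ≤ d) (hd : 0 < d)
    (hc : 0 ≤ c) (hc1 : c ≤ 1) (hcu : c*(4*u + 0.9974) ≤ 0.9974 - 0.01714*u) :
    c ≤ L*(1-σ)/(4*σ+L) := by
  have hL0 : 0 < L := lt_of_lt_of_le (by positivity) hL1
  rw [le_div_iff₀ (by positivity)]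
  nlinarith [mul_nonneg hσ0 (sub_nonneg.2 hL2), mul_nonneg hc (sub_nonneg.2 hσ1),
    mul_nonneg (sub_nonneg.2 hc1) (sub_nonneg.2 hL1),
    mul_le_mul_of_nonneg_right hσ2 hd.le,
    mul_le_mul_of_nonneg_right hσ1 (by linarith : (0:ℝ) ≤ 4*c)]

private lemma lam_bounds (n : ℕ) (hn : 11 ≤ n) :
    0.9974 * (Real.pi^2/(4*(n:ℝ)^2)) ≤ lamRR n 1 ∧
      lamRR n 1 ≤ Real.pi^2/(4*(n:ℝ)^2) := by
  have hN : (11:ℝ) ≤ (n:ℝ) := by exact_mod_cast hn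
  have hN0 : (0:ℝ) < (n:ℝ) := by linarith
  have hπ1 : (3.141592:ℝ) < Real.pi := Real.pi_gt_d6
  have hπ2 : Real.pi < 3.141593 := Real.pi_lt_d6
  have hx : lamRR n 1 = 4 * Real.sin (Real.pi/(4*(n:ℝ)))^2 := by
    rw [lamRR]; norm_num
  set x := Real.pi/(4*(n:ℝ)) with hxdef
  have hx0 : 0 < x := by positivity
  have hxsmall : x ≤ 0.0715 := by
    rw [hxdef, div_le_iff₀ (by positivity)]
    nlinarith
  have hsin_le : Real.sin x ≤ x := Real.sin_le hx0.le
  have hsin_ge : x - x^3/4 ≤ Real.sin x :=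
    (Real.sin_gt_sub_cube hx0).le.trans' (by nlinarith [pow_pos hx0 3])
  have hsin_pos : 0 < Real.sin x := Real.sin_pos_of_pos_of_lt_pi hx0 (by nlinarith)
  have hxsq : x^2 = (Real.pi^2/(4*(n:ℝ)^2))/4 := by
    rw [hxdef]; field_simp
  constructor
  · rw [hx]
    nlinarith [sq_nonneg x, sq_nonneg (x - x^3/4), mul_pos hx0 hx0]
  · rw [hx]
    nlinarith [sq_nonneg x]

set_option maxHeartbeats 2000000 in
private lemma tilde_ub (n : ℕ) (hn : 11 ≤ n) :
    lamTildeRR n 1 ≤ ((n:ℝ) - 0.58)/((n:ℝ)+1) := by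
  have hN : (11:ℝ) ≤ (n:ℝ) := by exact_mod_cast hn
  have hN0 : (0:ℝ) < (n:ℝ) := by linarith
  have hπ1 : (3.141592:ℝ) < Real.pi := Real.pi_gt_d6
  have hπ2 : Real.pi < 3.141593 := Real.pi_lt_d6
  have hπsq : Real.pi^2 ≤ 9.8697 := by nlinarith
  obtain ⟨hL1, hL2⟩ := lam_bounds n hn
  have hd0 : (0:ℝ) < Real.pi^2/(4*(n:ℝ)^2) := by positivity
  have hL0 : 0 < lamRR n 1 := lt_of_lt_of_le (by positivity) hL1
  set s : ℕ → ℝ := fun i => Real.sin ((i:ℝ)*Real.pi/(2*((n:ℝ)+1)))^2 with hsdef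
  set g : ℕ → ℝ := fun i => lamRR n 1 * (1 - s i)/(4*(s i) + lamRR n 1) with hgdef
  have hs0 : ∀ i, 0 ≤ s i := fun i => sq_nonneg _
  have hs1 : ∀ i, s i ≤ 1 := fun i => Real.sin_sq_le_one _
  have hg0 : ∀ i, 0 ≤ g i := by
    intro i
    apply div_nonneg (mul_nonneg hL0.le (by linarith [hs1 i]))
    linarith [hs0 i]
  -- bound on s i for small i
  have hs_bound : ∀ i : ℕ, 1 ≤ i → i ≤ 5 →
      s i ≤ (i:ℝ)^2 * (Real.pi^2/(4*(n:ℝ)^2)) ∧ s i ≤ 0.01714*(i:ℝ)^2 := by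
    intro i hi1 hi5
    have hi1' : (1:ℝ) ≤ (i:ℝ) := by exact_mod_cast hi1
    have hi5' : (i:ℝ) ≤ 5 := by exact_mod_cast hi5
    set y := (i:ℝ)*Real.pi/(2*((n:ℝ)+1)) with hydef
    have hy0 : 0 ≤ y := by positivity
    have hyπ : y ≤ Real.pi := by
      rw [hydef, div_le_iff₀ (by positivity)]
      nlinarith
    have hsiny : Real.sin y ≤ y := Real.sin_le hy0
    have hsiny0 : 0 ≤ Real.sin y := Real.sin_nonneg_of_nonneg_of_le_pi hy0 hyπ
    have hsq : s i ≤ y^2 := by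
      simpa [hsdef] using pow_le_pow_left₀ hsiny0 hsiny 2
    have hyval : y^2 = (i:ℝ)^2*Real.pi^2/(4*((n:ℝ)+1)^2) := by
      rw [hydef]; field_simp; ring
    have h144 : (144:ℝ) ≤ ((n:ℝ)+1)^2 := by nlinarith
    constructor
    · refine hsq.trans ?_
      calc y^2 = (i:ℝ)^2*Real.pi^2/(4*((n:ℝ)+1)^2) := hyval
        _ ≤ (i:ℝ)^2*Real.pi^2/(4*(n:ℝ)^2) :=
            div_le_div_of_nonneg_left (by positivity) (by positivity) (by nlinarith)
        _ = (i:ℝ)^2 * (Real.pi^2/(4*(n:ℝ)^2)) := by ring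
    · refine hsq.trans ?_
      rw [hyval, div_le_iff₀ (by positivity)]
      nlinarith [mul_le_mul_of_nonneg_left hπsq (sq_nonneg (i:ℝ)),
        mul_le_mul_of_nonneg_left h144 (by positivity : (0:ℝ) ≤ 0.01714*(i:ℝ)^2)]
  -- per-i lower bounds on g
  have hgc : ∀ i : ℕ, 1 ≤ i → i ≤ 5 → ∀ c : ℝ, 0 ≤ c → c ≤ 1 →
      c*(4*(i:ℝ)^2 + 0.9974) ≤ 0.9974 - 0.01714*(i:ℝ)^2 → c ≤ g i := by
    intro i hi1 hi5 c hc hc1 hcu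
    obtain ⟨hb1, hb2⟩ := hs_bound i hi1 hi5
    exact g_lower (s i) (lamRR n 1) (Real.pi^2/(4*(n:ℝ)^2)) c ((i:ℝ)^2)
      (hs0 i) hb1 hb2 hL1 hL2 hd0 hc hc1 hcu
  have hg1 : (0.196:ℝ) ≤ g 1 := hgc 1 (by norm_num) (by norm_num) 0.196
    (by norm_num) (by norm_num) (by push_cast; norm_num)
  have hg2 : (0.0546:ℝ) ≤ g 2 := hgc 2 (by norm_num) (by norm_num) 0.0546
    (by norm_num) (by norm_num) (by push_cast; norm_num)
  have hg3 : (0.0227:ℝ) ≤ g 3 := hgc 3 (by norm_num) (by norm_num) 0.0227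
    (by norm_num) (by norm_num) (by push_cast; norm_num)
  have hg4 : (0.0111:ℝ) ≤ g 4 := hgc 4 (by norm_num) (by norm_num) 0.0111
    (by norm_num) (by norm_num) (by push_cast; norm_num)
  have hg5 : (0.0056:ℝ) ≤ g 5 := hgc 5 (by norm_num) (by norm_num) 0.0056
    (by norm_num) (by norm_num) (by push_cast; norm_num)
  have hsum5 : ∑ i ∈ Finset.Icc 1 5, g i = g 1 + g 2 + g 3 + g 4 + g 5 := by
    rw [show Finset.Icc (1:ℕ) 5 = {1,2,3,4,5} from by decide]
    simp [Finset.sum_insert, Finset.mem_insert]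
    ring
  have hglb : (0.29:ℝ) ≤ ∑ i ∈ Finset.Icc 1 n, g i := by
    have hsub : Finset.Icc 1 5 ⊆ Finset.Icc 1 n := Finset.Icc_subset_Icc_right (by omega)
    have hle := Finset.sum_le_sum_of_subset_of_nonneg hsub (fun i _ _ => hg0 i)
    rw [hsum5] at hle
    linarith
  have hTeq : lamTildeRR n 1 = (2/((n:ℝ)+1)) * ((n:ℝ)/2 - ∑ i ∈ Finset.Icc 1 n, g i) := by
    rw [lamTildeRR]
    have hterm : ∀ i ∈ Finset.Icc 1 n,
        Real.sin ((i:ℝ)*(n:ℝ)*Real.pi/((n:ℝ)+1))^2 /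
          (4*Real.sin ((i:ℝ)*Real.pi/(2*((n:ℝ)+1)))^2 + lamRR n 1)
          = (1 - s i) - g i := by
      intro i _
      rw [numer_eq n i]
      exact term_decomp _ _ (hs0 i) hL0
    rw [Finset.sum_congr rfl hterm, Finset.sum_sub_distrib, Finset.sum_sub_distrib, sum_s n]
    simp only [Finset.sum_const, Nat.card_Icc, Nat.add_sub_cancel, nsmul_eq_mul, mul_one]
    ring
  rw [hTeq]
  have h2pos : (0:ℝ) < 2/((n:ℝ)+1) := by positivity
  calc (2/((n:ℝ)+1)) * ((n:ℝ)/2 - ∑ i ∈ Finset.Icc 1 n, g i)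
      ≤ (2/((n:ℝ)+1)) * ((n:ℝ)/2 - 0.29) := by
        apply mul_le_mul_of_nonneg_left (by linarith) h2pos.le
    _ = ((n:ℝ) - 0.58)/((n:ℝ)+1) := by
        field_simp
        ring

set_option maxHeartbeats 2000000 in
/-- if `n ≥ 11` (with `h = 1/(2n)`), then `3a₁ - b₁ < -0.049 h`, and
in particular `3a₁ - b₁ < -7h²/16`. -/
theorem three_a1_sub_b1_bound (n : ℕ) (hn : 11 ≤ n) (h : ℝ)
    (hh : h = 1 / (2 * (n : ℝ))) :
    3 * aRR n 1 - bRR n 1 < -0.049 * h ∧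
      3 * aRR n 1 - bRR n 1 < -7 * h ^ 2 / 16 := by
  have hN : (11:ℝ) ≤ (n:ℝ) := by exact_mod_cast hn
  have hN0 : (0:ℝ) < (n:ℝ) := by linarith
  have hπ1 : (3.141592:ℝ) < Real.pi := Real.pi_gt_d6
  have hπ2 : Real.pi < 3.141593 := Real.pi_lt_d6
  have hπsq : Real.pi^2 ≤ 9.8697 := by nlinarith
  obtain ⟨hL1, hL2⟩ := lam_bounds n hn
  have hL0 : 0 < lamRR n 1 := lt_of_lt_of_le (by positivity) hL1
  have hT := tilde_ub n hn
  -- algebraic identity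
  set L : ℝ := lamRR n 1 with hLdef
  set T : ℝ := lamTildeRR n 1 with hTdef
  set M : ℝ := 1 + 3/(2*(n:ℝ)) + L/2*(1 - 1/(2*(n:ℝ))) with hMdef
  have hab : 3 * aRR n 1 - bRR n 1 = T * M - 1 := by
    rw [aRR, bRR, hMdef, ← hLdef, ← hTdef]
    ring
  have hM0 : 0 < M := by
    rw [hMdef]
    have : (0:ℝ) < 1 - 1/(2*(n:ℝ)) := by
      rw [sub_pos, div_lt_iff₀ (by positivity)]
      linarith
    positivity
  have hMub : M ≤ 1 + 3/(2*(n:ℝ)) + Real.pi^2/(8*(n:ℝ)^2) := by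
    rw [hMdef]
    have h1 : L/2*(1 - 1/(2*(n:ℝ))) ≤ L/2 := by
      have : (0:ℝ) ≤ 1/(2*(n:ℝ)) := by positivity
      nlinarith
    have h2 : L/2 ≤ Real.pi^2/(8*(n:ℝ)^2) := by
      have e : Real.pi^2/(8*(n:ℝ)^2) = (Real.pi^2/(4*(n:ℝ)^2))/2 := by ring
      rw [e]; linarith [hL2]
    linarith
  have hB0 : (0:ℝ) ≤ ((n:ℝ) - 0.58)/((n:ℝ)+1) := div_nonneg (by linarith) (by linarith)
  -- main numeric inequality
  have hmain : T * M < 1 - 0.049/(2*(n:ℝ)) := by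
    calc T * M ≤ (((n:ℝ) - 0.58)/((n:ℝ)+1)) * M := mul_le_mul_of_nonneg_right hT hM0.le
      _ ≤ (((n:ℝ) - 0.58)/((n:ℝ)+1)) * (1 + 3/(2*(n:ℝ)) + Real.pi^2/(8*(n:ℝ)^2)) :=
          mul_le_mul_of_nonneg_left hMub hB0
      _ < 1 - 0.049/(2*(n:ℝ)) := by
          rw [div_mul_eq_mul_div, div_lt_iff₀ (by positivity)]
          have e1 : ((n:ℝ) - 0.58) * (1 + 3/(2*(n:ℝ)) + Real.pi^2/(8*(n:ℝ)^2))
              = (((n:ℝ) - 0.58)*(8*(n:ℝ)^2 + 12*(n:ℝ) + Real.pi^2))/(8*(n:ℝ)^2) := by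
            field_simp
            ring
          have e2 : (1 - 0.049/(2*(n:ℝ))) * ((n:ℝ)+1)
              = ((2*(n:ℝ) - 0.049)*((n:ℝ)+1)*(4*(n:ℝ)))/(8*(n:ℝ)^2) := by
            field_simp
            ring
          rw [e1, e2]
          rw [div_lt_div_iff_of_pos_right (by positivity)]
          nlinarith [sq_nonneg ((n:ℝ) - 4), hπsq, sq_nonneg Real.pi]
  have hhpos : 0 < h := by rw [hh]; positivity
  have hhsmall : h ≤ 1/22 := by
    rw [hh, div_le_div_iff₀ (by positivity) (by norm_num)]
    linarith
  have part1 : 3 * aRR n 1 - bRR n 1 < -0.049 * h := by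
    rw [hab, hh]
    have : 0.049 * (1/(2*(n:ℝ))) = 0.049/(2*(n:ℝ)) := by ring
    linarith [hmain]
  refine ⟨part1, ?_⟩
  have part2 : -0.049 * h < -7 * h^2 / 16 := by nlinarith
  linarith
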